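/- Let G be a graph with maximum vertex degree at most Δ, and let T₁, T₂ be disjoint vertex subsets with |T₁|, |T₂| ≥ κ such that T₁ ∪ T₂ is α-well-linked in G for some 0 < α < 1, and each of T₁, T₂ is node-well-linked in G. Then for any subsets T₁' ⊆ T₁, T₂' ⊆ T₂ with |T₁'| = |T₂'| ≤ ακ/(2Δ), the pair (T₁', T₂') is node-linked in G: there exist |T₁'| vertex-disjoint paths connecting T₁' to T₂'. -/

import Mathlib

attribute [local instance] Classical.propDecidable

noncomputable section
namespace StmtSeven

open SimpleGraph Finset


variable {V : Type}

/-- `S` separates `A` from `B` in `G`: every walk from `A` to `B` meets `S`. -/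
def Sep (G : SimpleGraph V) (A B S : Finset V) : Prop :=
  ∀ a ∈ A, ∀ b ∈ B, ∀ p : G.Walk a b, ∃ x ∈ p.support, x ∈ S

/-- A family of `k` pairwise vertex-disjoint `A`–`B` paths. -/
def DisjPaths (G : SimpleGraph V) (A B : Finset V) (k : ℕ) : Prop :=
  ∃ P : Finset (Σ u v : V, G.Walk u v),
    P.card = k ∧
    (∀ p ∈ P, p.2.2.IsPath ∧ p.1 ∈ A ∧ p.2.1 ∈ B) ∧
    (∀ p ∈ P, ∀ q ∈ P, p ≠ q → ∀ x ∈ p.2.2.support, x ∉ q.2.2.support)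

lemma first_hit {G : SimpleGraph V} {S : Finset V} {u v : V} (p : G.Walk u v)
    (h : ∃ z ∈ p.support, z ∈ S) :
    ∃ (c : V) (q : G.Walk u c), c ∈ S ∧ q.support.Sublist p.support ∧
      (∀ e ∈ q.edges, e ∈ p.edges) ∧ (∀ z ∈ q.support, z ∈ S → z = c) := by
  induction p with
  | nil =>
    obtain ⟨z, hz, hzS⟩ := h
    simp only [Walk.support_nil, List.mem_singleton] at hz
    subst hz
    exact ⟨z, Walk.nil, hzS, by simp, by simp, by simp⟩
  | @cons a b c hadj p ih =>
    by_cases ha : a ∈ S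
    · refine ⟨a, Walk.nil, ha, ?_, by simp, by simp⟩
      simp only [Walk.support_nil, Walk.support_cons]
      exact (List.nil_sublist p.support).cons₂ a
    · have h' : ∃ z ∈ p.support, z ∈ S := by
        obtain ⟨z, hz, hzS⟩ := h
        simp only [Walk.support_cons, List.mem_cons] at hz
        rcases hz with rfl | hz
        · exact absurd hzS ha
        · exact ⟨z, hz, hzS⟩
      obtain ⟨d, q, hdS, hsub, hed, honly⟩ := ih h'
      refine ⟨d, Walk.cons hadj q, hdS, ?_, ?_, ?_⟩
      · simpa only [Walk.support_cons] using hsub.cons₂ a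
      · intro e he
        simp only [Walk.edges_cons, List.mem_cons] at he ⊢
        rcases he with rfl | he
        · exact Or.inl rfl
        · exact Or.inr (hed e he)
      · intro z hz hzS
        simp only [Walk.support_cons, List.mem_cons] at hz
        rcases hz with rfl | hz
        · exact absurd hzS ha
        · exact honly z hz hzS

lemma Sep.anti {G G' : SimpleGraph V} (hle : G' ≤ G) {A B S : Finset V}
    (h : Sep G A B S) : Sep G' A B S := by
  intro a ha b hb p
  have hp : ∀ e ∈ p.edges, e ∈ G.edgeSet := fun e he =>
    SimpleGraph.edgeSet_mono hle (p.edges_subset_edgeSet he)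
  obtain ⟨x, hx, hxS⟩ := h a ha b hb (p.transfer G hp)
  rw [Walk.support_transfer] at hx
  exact ⟨x, hx, hxS⟩

lemma disjPaths_of_fun {G : SimpleGraph V} {A B : Finset V} {k : ℕ} {ι : Type} (s : Finset ι)
    (hs : s.card = k) (F : ι → Σ u v : V, G.Walk u v)
    (hpath : ∀ i ∈ s, (F i).2.2.IsPath ∧ (F i).1 ∈ A ∧ (F i).2.1 ∈ B)
    (hdisj : ∀ i ∈ s, ∀ j ∈ s, i ≠ j → ∀ x ∈ (F i).2.2.support, x ∉ (F j).2.2.support) :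
    DisjPaths G A B k := by
  have hinj : Set.InjOn F s := by
    intro i hi j hj hij
    by_contra hne
    exact hdisj i hi j hj hne (F i).1 (F i).2.2.start_mem_support
      (by rw [hij]; exact (F j).2.2.start_mem_support)
  refine ⟨s.image F, by rw [Finset.card_image_of_injOn hinj, hs], ?_, ?_⟩
  · intro p hp
    obtain ⟨i, hi, rfl⟩ := Finset.mem_image.mp hp
    exact hpath i hi
  · intro p hp q hq hpq x hxp
    obtain ⟨i, hi, rfl⟩ := Finset.mem_image.mp hp
    obtain ⟨j, hj, rfl⟩ := Finset.mem_image.mp hq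
    exact hdisj i hi j hj (fun h => hpq (by rw [h])) x hxp

section Contraction

/-- The merge map identifying `y` with `x`. -/
def mrg (x y : V) : V → V := fun z => if z = y then x else z

lemma mrg_apply_ne {x y z : V} (h : z ≠ y) : mrg x y z = z := if_neg h

lemma mrg_apply_y {x y : V} : mrg x y y = x := if_pos rfl

/-- The contraction of the edge `xy`, realized on the same vertex set
(`y` becomes an isolated vertex). -/
def Contr (G : SimpleGraph V) (x y : V) : SimpleGraph V where
  Adj a b := a ≠ b ∧ ∃ a' b', G.Adj a' b' ∧ mrg x y a' = a ∧ mrg x y b' = b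
  symm := ⟨by
    rintro a b ⟨hne, a', b', h, ha, hb⟩
    exact ⟨hne.symm, b', a', h.symm, hb, ha⟩⟩
  loopless := ⟨by rintro a ⟨hne, -⟩; exact hne rfl⟩

variable {G : SimpleGraph V} {x y : V}

lemma mrg_eq_cases (hadj : G.Adj x y) {a b : V} (h : mrg x y a = mrg x y b) :
    a = b ∨ G.Adj a b := by
  unfold mrg at h
  split_ifs at h with h1 h2 h2
  · left; rw [h1, h2]
  · subst h1; right; exact (h ▸ hadj).symm
  · subst h2; right; exact h ▸ hadj
  · left; exact h

lemma connector (hadj : G.Adj x y) {a b : V} (h : mrg x y a = mrg x y b) :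
    ∃ q : G.Walk a b, ∀ z ∈ q.support, z = a ∨ z = b := by
  rcases mrg_eq_cases hadj h with rfl | hab
  · exact ⟨Walk.nil, by simp⟩
  · exact ⟨Walk.cons hab Walk.nil, by simp⟩

lemma exists_push (hadj : G.Adj x y) : ∀ {a b : V} (p : G.Walk a b),
    ∃ q : (Contr G x y).Walk (mrg x y a) (mrg x y b),
      ∀ z ∈ q.support, ∃ z' ∈ p.support, mrg x y z' = z := by
  intro a b p
  induction p with
  | nil => exact ⟨Walk.nil, by simp⟩
  | @cons a c b h p ih =>
    obtain ⟨q', hq'⟩ := ih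
    by_cases hm : mrg x y a = mrg x y c
    · refine ⟨q'.copy hm.symm rfl, ?_⟩
      intro z hz
      rw [Walk.support_copy] at hz
      obtain ⟨z', hz', hzz⟩ := hq' z hz
      exact ⟨z', by simp [Walk.support_cons, hz'], hzz⟩
    · refine ⟨Walk.cons (show (Contr G x y).Adj (mrg x y a) (mrg x y c) from ⟨hm, a, c, h, rfl, rfl⟩) q', ?_⟩
      intro z hz
      rw [Walk.support_cons, List.mem_cons] at hz
      rcases hz with rfl | hz
      · exact ⟨a, by simp, rfl⟩
      · obtain ⟨z', hz', hzz⟩ := hq' z hz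
        exact ⟨z', by simp [Walk.support_cons, hz'], hzz⟩

lemma exists_lift (hadj : G.Adj x y) : ∀ {a b : V} (p : (Contr G x y).Walk a b)
    (a' b' : V), mrg x y a' = a → mrg x y b' = b →
    ∃ q : G.Walk a' b', (∀ z ∈ q.support, z ∈ p.support ∨ z = y) ∧
      (y ∈ q.support → x ∈ p.support) := by
  intro a b p
  induction p with
  | @nil a =>
    intro a' b' ha' hb'
    obtain ⟨q, hq⟩ := connector hadj (ha'.trans hb'.symm)
    refine ⟨q, ?_, ?_⟩
    · intro z hz
      rcases hq z hz with rfl | rfl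
      · by_cases hzy : z = y
        · exact Or.inr hzy
        · left; rw [← mrg_apply_ne (x := x) hzy, ha']; exact Walk.start_mem_support _
      · by_cases hzy : z = y
        · exact Or.inr hzy
        · left; rw [← mrg_apply_ne (x := x) hzy, hb']; exact Walk.start_mem_support _
    · intro hy
      rcases hq y hy with rfl | rfl
      · rw [← ha', mrg_apply_y]; exact Walk.start_mem_support _
      · rw [← hb', mrg_apply_y]; exact Walk.start_mem_support _
  | @cons a c b h p' ih =>
    intro a' b' ha' hb'
    obtain ⟨a₀, c₀, h₀, ha₀, hc₀⟩ := h.2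
    obtain ⟨q', hq'sup, hq'y⟩ := ih c₀ b' hc₀ hb'
    obtain ⟨r, hr⟩ := connector hadj (ha'.trans ha₀.symm)
    refine ⟨r.append (Walk.cons h₀ q'), ?_, ?_⟩
    · intro z hz
      rw [Walk.mem_support_append_iff] at hz
      have hfib : ∀ w : V, mrg x y w = a → w ∈ (Walk.cons h p').support ∨ w = y := by
        intro w hw
        by_cases hwy : w = y
        · exact Or.inr hwy
        · left; rw [← mrg_apply_ne (x := x) hwy, hw]; exact Walk.start_mem_support _
      rcases hz with hz | hz
      · rcases hr z hz with rfl | rfl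
        · exact hfib z ha'
        · exact hfib z ha₀
      · rw [Walk.support_cons, List.mem_cons] at hz
        rcases hz with rfl | hz
        · exact hfib z ha₀
        · rcases hq'sup z hz with hz' | rfl
          · left; rw [Walk.support_cons]; exact List.mem_cons_of_mem _ hz'
          · exact Or.inr rfl
    · intro hy
      have hfib : mrg x y y = a → x ∈ (Walk.cons h p').support := by
        intro hw
        rw [mrg_apply_y] at hw
        rw [Walk.support_cons]
        exact List.mem_cons.mpr (Or.inl hw)
      rw [Walk.mem_support_append_iff] at hy
      rcases hy with hy | hy
      · rcases hr y hy with rfl | rfl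
        · exact hfib ha'
        · exact hfib ha₀
      · rw [Walk.support_cons, List.mem_cons] at hy
        rcases hy with rfl | hy
        · exact hfib ha₀
        · have := hq'y hy
          rw [Walk.support_cons]; exact List.mem_cons_of_mem _ this

lemma contr_edge_lt [Fintype V] (hadj : G.Adj x y) :
    (Contr G x y).edgeSet.ncard < G.edgeSet.ncard := by
  have hsub : (Contr G x y).edgeSet ⊆ Sym2.map (mrg x y) '' (G.edgeSet \ {s(x, y)}) := by
    intro ε hε
    induction ε with
    | h a b =>
      obtain ⟨hne, a', b', h', ha, hb⟩ := hε
      refine ⟨s(a', b'), ⟨h', ?_⟩, by rw [Sym2.map_pair_eq, ha, hb]⟩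
      intro heq
      rw [Set.mem_singleton_iff, Sym2.eq_iff] at heq
      rcases heq with ⟨rfl, rfl⟩ | ⟨rfl, rfl⟩
      · exact hne (by rw [← ha, ← hb, mrg_apply_y, mrg_apply_ne hadj.ne])
      · exact hne (by rw [← ha, ← hb, mrg_apply_y, mrg_apply_ne hadj.ne])
  calc (Contr G x y).edgeSet.ncard
      ≤ (Sym2.map (mrg x y) '' (G.edgeSet \ {s(x, y)})).ncard :=
        Set.ncard_le_ncard hsub (Set.toFinite _)
    _ ≤ (G.edgeSet \ {s(x, y)}).ncard := Set.ncard_image_le (Set.toFinite _)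
    _ < G.edgeSet.ncard := Set.ncard_diff_singleton_lt_of_mem hadj (Set.toFinite _)

open Finset in
lemma sep_push (hadj : G.Adj x y) {A B T : Finset V}
    (h : Sep (Contr G x y) (A.image (mrg x y)) (B.image (mrg x y)) T) :
    Sep G A B (if x ∈ T then insert y T else T) := by
  intro a ha b hb p
  obtain ⟨q, hq⟩ := exists_push hadj p
  obtain ⟨z, hz, hzT⟩ := h (mrg x y a) (Finset.mem_image_of_mem _ ha)
    (mrg x y b) (Finset.mem_image_of_mem _ hb) q
  obtain ⟨z', hz', hzz⟩ := hq z hz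
  refine ⟨z', hz', ?_⟩
  by_cases hzy : z' = y
  · subst hzy
    rw [mrg_apply_y] at hzz
    rw [if_pos (hzz ▸ hzT)]
    exact Finset.mem_insert_self _ _
  · rw [mrg_apply_ne hzy] at hzz
    subst hzz
    split_ifs
    · exact Finset.mem_insert_of_mem hzT
    · exact hzT

end Contraction

open Finset in
theorem menger [Fintype V] (k : ℕ) :
    ∀ (n : ℕ) (G : SimpleGraph V) (A B : Finset V), G.edgeSet.ncard ≤ n →
      (∀ S : Finset V, Sep G A B S → k ≤ S.card) → DisjPaths G A B k := by
  intro n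
  induction n with
  | zero =>
    intro G A B hn hsep
    have hedge : ∀ {u v' : V}, ¬ G.Adj u v' := by
      intro u v' h
      have h1 : G.edgeSet.Nonempty := ⟨s(u, v'), h⟩
      have h2 := (Set.ncard_pos (Set.toFinite _)).mpr h1
      omega
    have hsep0 : Sep G A B (A ∩ B) := by
      intro a ha b hb p
      cases p with
      | nil => exact ⟨a, by simp, Finset.mem_inter.mpr ⟨ha, hb⟩⟩
      | cons h q => exact absurd h hedge
    have hk := hsep _ hsep0
    obtain ⟨K, hKsub, hKcard⟩ := Finset.exists_subset_card_eq hk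
    refine disjPaths_of_fun K hKcard (fun a => ⟨a, a, Walk.nil⟩) ?_ ?_
    · intro a haK
      have hmem := hKsub haK
      rw [Finset.mem_inter] at hmem
      exact ⟨Walk.IsPath.nil, hmem.1, hmem.2⟩
    · intro i hi j hj hij z hz
      simp only [Walk.support_nil, List.mem_singleton] at hz ⊢
      subst hz
      exact hij
  | succ n ih =>
    intro G A B hn hsep
    by_cases h0 : G.edgeSet.ncard ≤ n
    · exact ih G A B h0 hsep
    have hne : G.edgeSet.Nonempty := by
      rw [Set.nonempty_iff_ne_empty]
      intro h
      rw [h, Set.ncard_empty] at h0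
      omega
    have hexy : ∃ x y, G.Adj x y := by
      obtain ⟨e, he⟩ := hne
      induction e with
      | h x y => exact ⟨x, y, he⟩
    obtain ⟨x, y, hxy⟩ := hexy
    by_cases hC : ∀ T : Finset V,
        Sep (Contr G x y) (A.image (mrg x y)) (B.image (mrg x y)) T → k ≤ T.card
    · -- contraction case: lift a path system from `G/e`
      have hcard : (Contr G x y).edgeSet.ncard ≤ n := by
        have := contr_edge_lt (G := G) hxy
        omega
      obtain ⟨P, hPcard, hPmem, hPdisj⟩ := ih (Contr G x y) _ _ hcard hC
      have hlift : ∀ p : (Σ u v : V, (Contr G x y).Walk u v),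
          ∃ (a b : V) (q : G.Walk a b), p ∈ P →
            (a ∈ A ∧ b ∈ B ∧ q.IsPath ∧
            (∀ z ∈ q.support, z ∈ p.2.2.support ∨ z = y) ∧
            (y ∈ q.support → x ∈ p.2.2.support)) := by
        intro p
        by_cases hp : p ∈ P
        · obtain ⟨-, hA, hB⟩ := hPmem p hp
          obtain ⟨a, haA, ha⟩ := Finset.mem_image.mp hA
          obtain ⟨b, hbB, hb⟩ := Finset.mem_image.mp hB
          obtain ⟨q, hsup, hy⟩ := exists_lift hxy p.2.2 a b ha hb
          exact ⟨a, b, q.bypass, fun _ => ⟨haA, hbB, q.bypass_isPath,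
            fun z hz => hsup z (q.support_bypass_subset hz),
            fun hy' => hy (q.support_bypass_subset hy')⟩⟩
        · exact ⟨x, x, Walk.nil, fun h => absurd h hp⟩
      choose af bf qf hq using hlift
      refine disjPaths_of_fun P.attach (by simp [hPcard])
        (fun p => ⟨af p.1, bf p.1, qf p.1⟩) ?_ ?_
      · intro i _
        obtain ⟨hA, hB, hpath, -, -⟩ := hq i.1 i.2
        exact ⟨hpath, hA, hB⟩
      · intro i _ j _ hij z hzi hzj
        obtain ⟨-, -, -, hsupi, hyi⟩ := hq i.1 i.2
        obtain ⟨-, -, -, hsupj, hyj⟩ := hq j.1 j.2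
        have hne' : i.1 ≠ j.1 := fun h => hij (Subtype.ext h)
        by_cases hzy : z = y
        · subst hzy
          exact hPdisj i.1 i.2 j.1 j.2 hne' x (hyi hzi) (hyj hzj)
        · exact hPdisj i.1 i.2 j.1 j.2 hne' z
            ((hsupi z hzi).resolve_right hzy) ((hsupj z hzj).resolve_right hzy)
    · -- gluing case
      push_neg at hC
      obtain ⟨T₀, hT₀sep, hT₀card⟩ := hC
      set T : Finset V := if x ∈ T₀ then insert y T₀ else T₀ with hTdef
      have hTsep : Sep G A B T := sep_push hxy hT₀sep
      have hTk : k ≤ T.card := hsep T hTsep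
      have hxT₀ : x ∈ T₀ := by
        by_contra hx
        rw [hTdef, if_neg hx] at hTk
        omega
      have hTeq : T = insert y T₀ := by rw [hTdef, if_pos hxT₀]
      have hxT : x ∈ T := by rw [hTeq]; exact Finset.mem_insert_of_mem hxT₀
      have hyT : y ∈ T := by rw [hTeq]; exact Finset.mem_insert_self _ _
      have hTcard : T.card = k := by
        have h1 : T.card ≤ T₀.card + 1 := by
          rw [hTeq]
          exact Finset.card_insert_le _ _
        omega
      set G' := G.deleteEdges {s(x, y)} with hG'def
      have hG'le : G' ≤ G := SimpleGraph.deleteEdges_le _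
      have hG'n : G'.edgeSet.ncard ≤ n := by
        have h1 : G'.edgeSet = G.edgeSet \ {s(x, y)} := G.edgeSet_deleteEdges _
        have h2 : (G.edgeSet \ {s(x, y)}).ncard < G.edgeSet.ncard :=
          Set.ncard_diff_singleton_lt_of_mem hxy (Set.toFinite _)
        rw [h1]
        omega
      have hsepG' : Sep G' A B T := Sep.anti hG'le hTsep
      have havoid : ∀ {u c : V} (q : G.Walk u c), c ∈ T → (∀ z ∈ q.support, z ∈ T → z = c) →
          ∀ e ∈ q.edges, e ∉ ({s(x, y)} : Set (Sym2 V)) := by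
        intro u c q hcT honly e heq hmem
        rw [Set.mem_singleton_iff] at hmem
        subst hmem
        have hx' := q.fst_mem_support_of_mem_edges heq
        have hy' := q.snd_mem_support_of_mem_edges heq
        have e1 : x = c := honly x hx' hxT
        have e2 : y = c := honly y hy' hyT
        exact hxy.ne (e1.trans e2.symm)
      have claim1 : ∀ W : Finset V, Sep G' A T W → k ≤ W.card := by
        intro W hW
        apply hsep
        intro a ha b hb p
        obtain ⟨c, q, hcT, hsub, hed, honly⟩ := first_hit p (hTsep a ha b hb p)
        obtain ⟨w, hw, hwW⟩ := hW a ha c hcT (q.toDeleteEdges {s(x, y)} (havoid q hcT honly))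
        rw [Walk.support_transfer] at hw
        exact ⟨w, hsub.subset hw, hwW⟩
      have claim2 : ∀ W : Finset V, Sep G' T B W → k ≤ W.card := by
        intro W hW
        apply hsep
        intro a ha b hb p
        have hmeet : ∃ z ∈ p.reverse.support, z ∈ T := by
          obtain ⟨z, hz, hzT⟩ := hTsep a ha b hb p
          exact ⟨z, by rwa [Walk.support_reverse, List.mem_reverse], hzT⟩
        obtain ⟨c, q, hcT, hsub, hed, honly⟩ := first_hit p.reverse hmeet
        obtain ⟨w, hw, hwW⟩ := hW c hcT b hb
          (q.toDeleteEdges {s(x, y)} (havoid q hcT honly)).reverse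
        rw [Walk.support_reverse, List.mem_reverse, Walk.support_transfer] at hw
        have hwp : w ∈ p.support := by
          have h1 := hsub.subset hw
          rwa [Walk.support_reverse, List.mem_reverse] at h1
        exact ⟨w, hwp, hwW⟩
      obtain ⟨P₁, hP₁card, hP₁mem, hP₁disj⟩ := ih G' A T hG'n claim1
      obtain ⟨P₂, hP₂card, hP₂mem, hP₂disj⟩ := ih G' T B hG'n claim2
      -- trim the paths of `P₁` at their first `T`-vertex
      have htrim1 : ∀ p : (Σ u v : V, G'.Walk u v), ∃ (c : V) (q : G'.Walk p.1 c),
          p ∈ P₁ → (c ∈ T ∧ q.IsPath ∧ (∀ z ∈ q.support, z ∈ p.2.2.support) ∧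
            (∀ z ∈ q.support, z ∈ T → z = c)) := by
        intro p
        by_cases hp : p ∈ P₁
        · obtain ⟨hpath, hA', hT'⟩ := hP₁mem p hp
          obtain ⟨c, q, hcT, hsub, hed, honly⟩ := first_hit p.2.2
            ⟨p.2.1, p.2.2.end_mem_support, hT'⟩
          exact ⟨c, q, fun _ => ⟨hcT,
            (Walk.isPath_def _).mpr (((Walk.isPath_def _).mp hpath).sublist hsub),
            fun z hz => hsub.subset hz, honly⟩⟩
        · exact ⟨p.2.1, p.2.2, fun h => absurd h hp⟩
      -- trim the paths of `P₂` at their last `T`-vertex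
      have htrim2 : ∀ p : (Σ u v : V, G'.Walk u v), ∃ (c : V) (q : G'.Walk c p.2.1),
          p ∈ P₂ → (c ∈ T ∧ q.IsPath ∧ (∀ z ∈ q.support, z ∈ p.2.2.support) ∧
            (∀ z ∈ q.support, z ∈ T → z = c)) := by
        intro p
        by_cases hp : p ∈ P₂
        · obtain ⟨hpath, hT', hB'⟩ := hP₂mem p hp
          have hmeet : ∃ z ∈ p.2.2.reverse.support, z ∈ T := by
            refine ⟨p.1, ?_, hT'⟩
            rw [Walk.support_reverse, List.mem_reverse]
            exact p.2.2.start_mem_support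
          obtain ⟨c, q, hcT, hsub, hed, honly⟩ := first_hit p.2.2.reverse hmeet
          refine ⟨c, q.reverse, fun _ => ⟨hcT, ?_, ?_, ?_⟩⟩
          · rw [Walk.isPath_def, Walk.support_reverse, List.nodup_reverse]
            have h1 : p.2.2.reverse.support.Nodup := by
              rw [Walk.support_reverse, List.nodup_reverse]
              exact (Walk.isPath_def _).mp hpath
            exact h1.sublist hsub
          · intro z hz
            rw [Walk.support_reverse, List.mem_reverse] at hz
            have h1 := hsub.subset hz
            rwa [Walk.support_reverse, List.mem_reverse] at h1
          · intro z hz hzT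
            rw [Walk.support_reverse, List.mem_reverse] at hz
            exact honly z hz hzT
        · exact ⟨p.1, p.2.2, fun h => absurd h hp⟩
      choose c₁ q₁ hq₁ using htrim1
      choose c₂ q₂ hq₂ using htrim2
      -- the ends of the trimmed `P₁`-paths exhaust `T`
      have hinj1 : Set.InjOn c₁ P₁ := by
        intro p hp p' hp' heq
        by_contra hne'
        have h1 : c₁ p ∈ p.2.2.support := (hq₁ p hp).2.2.1 _ (q₁ p).end_mem_support
        have h2 : c₁ p ∈ p'.2.2.support := by
          rw [heq]
          exact (hq₁ p' hp').2.2.1 _ (q₁ p').end_mem_support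
        exact hP₁disj p hp p' hp' hne' _ h1 h2
      have hinj2 : Set.InjOn c₂ P₂ := by
        intro p hp p' hp' heq
        by_contra hne'
        have h1 : c₂ p ∈ p.2.2.support := (hq₂ p hp).2.2.1 _ (q₂ p).start_mem_support
        have h2 : c₂ p ∈ p'.2.2.support := by
          rw [heq]
          exact (hq₂ p' hp').2.2.1 _ (q₂ p').start_mem_support
        exact hP₂disj p hp p' hp' hne' _ h1 h2
      have hsurj1 : ∀ t ∈ T, ∃ p ∈ P₁, c₁ p = t := by
        have himg : P₁.image c₁ = T := by
          apply Finset.eq_of_subset_of_card_le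
          · intro t ht
            obtain ⟨p, hp, rfl⟩ := Finset.mem_image.mp ht
            exact (hq₁ p hp).1
          · rw [hTcard, Finset.card_image_of_injOn hinj1, hP₁card]
        intro t ht
        rw [← himg] at ht
        obtain ⟨p, hp, hpt⟩ := Finset.mem_image.mp ht
        exact ⟨p, hp, hpt⟩
      have hsurj2 : ∀ t ∈ T, ∃ p ∈ P₂, c₂ p = t := by
        have himg : P₂.image c₂ = T := by
          apply Finset.eq_of_subset_of_card_le
          · intro t ht
            obtain ⟨p, hp, rfl⟩ := Finset.mem_image.mp ht
            exact (hq₂ p hp).1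
          · rw [hTcard, Finset.card_image_of_injOn hinj2, hP₂card]
        intro t ht
        rw [← himg] at ht
        obtain ⟨p, hp, hpt⟩ := Finset.mem_image.mp ht
        exact ⟨p, hp, hpt⟩
      choose f₁ hf₁mem hf₁eq using hsurj1
      choose f₂ hf₂mem hf₂eq using hsurj2
      -- key cross-disjointness claim
      have hcross : ∀ p ∈ P₁, ∀ p' ∈ P₂, ∀ z, z ∈ (q₁ p).support → z ∈ (q₂ p').support →
          z = c₁ p ∧ z = c₂ p' := by
        intro p hp p' hp' z hz1 hz2
        obtain ⟨hc1T, hpath1, hsub1, honly1⟩ := hq₁ p hp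
        obtain ⟨hc2T, hpath2, hsub2, honly2⟩ := hq₂ p' hp'
        by_cases hzT : z ∈ T
        · exact ⟨honly1 z hz1 hzT, honly2 z hz2 hzT⟩
        exfalso
        obtain ⟨w, hw, hwT⟩ := hsepG' p.1 (hP₁mem p hp).2.1 p'.2.1 (hP₂mem p' hp').2.2
          (((q₁ p).takeUntil z hz1).append ((q₂ p').dropUntil z hz2))
        rw [Walk.mem_support_append_iff] at hw
        rcases hw with hw | hw
        · have hwc : w = c₁ p := honly1 w ((q₁ p).support_takeUntil_subset hz1 hw) hwT
          subst hwc
          have hnodup : ((q₁ p).support).Nodup := (Walk.isPath_def _).mp hpath1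
          have hspec : (q₁ p).support =
              ((q₁ p).takeUntil z hz1).support ++ ((q₁ p).dropUntil z hz1).support.tail := by
            rw [← Walk.support_append, Walk.take_spec]
          have hcz : c₁ p ≠ z := fun h => hzT (h ▸ hc1T)
          have hctail : c₁ p ∈ ((q₁ p).dropUntil z hz1).support.tail := by
            have hend : c₁ p ∈ ((q₁ p).dropUntil z hz1).support := Walk.end_mem_support _
            rw [Walk.support_eq_cons] at hend
            rcases List.mem_cons.mp hend with h | h
            · exact absurd h hcz
            · exact h
          rw [hspec] at hnodup
          exact (List.disjoint_of_nodup_append hnodup) hw hctail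
        · have hwc : w = c₂ p' := honly2 w ((q₂ p').support_dropUntil_subset hz2 hw) hwT
          subst hwc
          have hnodup : ((q₂ p').support).Nodup := (Walk.isPath_def _).mp hpath2
          have hspec : (q₂ p').support =
              ((q₂ p').takeUntil z hz2).support ++ ((q₂ p').dropUntil z hz2).support.tail := by
            rw [← Walk.support_append, Walk.take_spec]
          have hcz : c₂ p' ≠ z := fun h => hzT (h ▸ hc2T)
          have hhead : c₂ p' ∈ ((q₂ p').takeUntil z hz2).support :=
            Walk.start_mem_support _
          have hctail : c₂ p' ∈ ((q₂ p').dropUntil z hz2).support.tail := by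
            rw [Walk.support_eq_cons] at hw
            rcases List.mem_cons.mp hw with h | h
            · exact absurd h hcz
            · exact h
          rw [hspec] at hnodup
          exact (List.disjoint_of_nodup_append hnodup) hhead hctail
      -- glue the two systems along `T`
      have hG'edges : ∀ {u v' : V} (w : G'.Walk u v'), ∀ e ∈ w.edges, e ∈ G.edgeSet :=
        fun w e hew => SimpleGraph.edgeSet_mono hG'le (w.edges_subset_edgeSet hew)
      refine disjPaths_of_fun T.attach (by rw [Finset.card_attach, hTcard])
        (fun t => ⟨(f₁ t.1 t.2).1, (f₂ t.1 t.2).2.1,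
          ((((q₁ (f₁ t.1 t.2)).copy rfl (hf₁eq t.1 t.2)).append
            ((q₂ (f₂ t.1 t.2)).copy (hf₂eq t.1 t.2) rfl)).transfer G (hG'edges _))⟩) ?_ ?_
      · rintro ⟨t, ht⟩ -
        obtain ⟨hc1T, hpath1, hsub1, honly1⟩ := hq₁ (f₁ t ht) (hf₁mem t ht)
        obtain ⟨hc2T, hpath2, hsub2, honly2⟩ := hq₂ (f₂ t ht) (hf₂mem t ht)
        refine ⟨?_, (hP₁mem _ (hf₁mem t ht)).2.1, (hP₂mem _ (hf₂mem t ht)).2.2⟩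
        rw [Walk.isPath_def, Walk.support_transfer, Walk.support_append,
          Walk.support_copy, Walk.support_copy]
        refine ((Walk.isPath_def _).mp hpath1).append (((Walk.isPath_def _).mp hpath2).tail) ?_
        intro z hz1 hz2
        have hz2' : z ∈ (q₂ (f₂ t ht)).support := List.mem_of_mem_tail hz2
        obtain ⟨he1, he2⟩ := hcross _ (hf₁mem t ht) _ (hf₂mem t ht) z hz1 hz2'
        have hznodup : ((q₂ (f₂ t ht)).support).Nodup := (Walk.isPath_def _).mp hpath2
        rw [Walk.support_eq_cons] at hznodup
        have : z = c₂ (f₂ t ht) := he2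
        rw [this] at hz2
        exact (List.nodup_cons.mp hznodup).1 hz2
      · rintro ⟨t, ht⟩ - ⟨t', ht'⟩ - hij z hz1 hz2
        have htt : t ≠ t' := fun h => hij (Subtype.ext h)
        rw [Walk.support_transfer, Walk.mem_support_append_iff,
          Walk.support_copy, Walk.support_copy] at hz1 hz2
        have hmem1 : ∀ {pp}, pp ∈ P₁ → z ∈ (q₁ pp).support → z ∈ pp.2.2.support :=
          fun hpp hzz => (hq₁ _ hpp).2.2.1 z hzz
        have hmem2 : ∀ {pp}, pp ∈ P₂ → z ∈ (q₂ pp).support → z ∈ pp.2.2.support :=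
          fun hpp hzz => (hq₂ _ hpp).2.2.1 z hzz
        rcases hz1 with hz1 | hz1 <;> rcases hz2 with hz2 | hz2
        · -- both in P₁-parts
          have hne1 : f₁ t ht ≠ f₁ t' ht' := by
            intro h
            apply htt
            rw [← hf₁eq t ht, ← hf₁eq t' ht', h]
          exact hP₁disj _ (hf₁mem t ht) _ (hf₁mem t' ht') hne1 z
            (hmem1 (hf₁mem t ht) hz1) (hmem1 (hf₁mem t' ht') hz2)
        · -- P₁-part of t, P₂-part of t'
          obtain ⟨he1, he2⟩ := hcross _ (hf₁mem t ht) _ (hf₂mem t' ht') z hz1 hz2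
          apply htt
          rw [← hf₁eq t ht, ← hf₂eq t' ht', ← he1, ← he2]
        · -- P₂-part of t, P₁-part of t'
          obtain ⟨he1, he2⟩ := hcross _ (hf₁mem t' ht') _ (hf₂mem t ht) z hz2 hz1
          apply htt
          rw [← hf₁eq t' ht', ← hf₂eq t ht, ← he1, ← he2]
        · have hne2 : f₂ t ht ≠ f₂ t' ht' := by
            intro h
            apply htt
            rw [← hf₂eq t ht, ← hf₂eq t' ht', h]
          exact hP₂disj _ (hf₂mem t ht) _ (hf₂mem t' ht') hne2 z
            (hmem2 (hf₂mem t ht) hz1) (hmem2 (hf₂mem t' ht') hz2)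

end StmtSeven

variable {V : Type}

/-- The degree of a vertex `v` in the simple graph `G`. -/
def deg [Fintype V] (G : SimpleGraph V) (v : V) : ℕ :=
  (Finset.univ.filter (fun u => G.Adj v u)).card

/-- The boundary `Γ(C)` of a cluster `C`: the vertices of `C` having a neighbor outside `C`. -/
def bdry (G : SimpleGraph V) (C : Finset V) : Finset V :=
  C.filter (fun v => ∃ u, u ∉ C ∧ G.Adj v u)

/-- The number of edges `|E(A,B)|` with one endpoint in `A` and the other in `B`
(for disjoint `A`, `B`). -/
def cutCard (G : SimpleGraph V) (A B : Finset V) : ℕ :=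
  ((A ×ˢ B).filter (fun ab => G.Adj ab.1 ab.2)).card

/-- A flow in `G[C]` from `A` to `B`, in which every vertex of `A` sends exactly one
unit of flow, every vertex of `B` receives exactly one unit of flow, and the total
flow through any edge is at most `η`. -/
def HasUnitFlowIn (G : SimpleGraph V) (C A B : Finset V) (η : ℝ) : Prop :=
  ∃ (P : Finset (Σ u v : V, G.Walk u v)) (f : (Σ u v : V, G.Walk u v) → ℝ),
    (∀ p ∈ P, 0 ≤ f p) ∧
    (∀ p ∈ P, p.1 ∈ A ∧ p.2.1 ∈ B) ∧
    (∀ p ∈ P, ∀ x ∈ p.2.2.support, x ∈ C) ∧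
    (∀ a ∈ A, ∑ p ∈ P.filter (fun p => p.1 = a), f p = 1) ∧
    (∀ b ∈ B, ∑ p ∈ P.filter (fun p => p.2.1 = b), f p = 1) ∧
    (∀ e : Sym2 V, ∑ p ∈ P.filter (fun p => e ∈ p.2.2.edges), f p ≤ η)

/-- `T` is `α`-well-linked in `G[C]`: every pair of disjoint equal-sized subsets of `T`
can be connected, one-to-one, by a flow of edge-congestion at most `1/α` inside `C`. -/
def WellLinkedIn (G : SimpleGraph V) (C T : Finset V) (α : ℝ) : Prop :=
  ∀ T' T'' : Finset V, T' ⊆ T → T'' ⊆ T → Disjoint T' T'' → T'.card = T''.card →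
    HasUnitFlowIn G C T' T'' (1 / α)

/-- `T` is `(k',α)`-well-linked in `G[C]`. -/
def WellLinkedKIn (G : SimpleGraph V) (C T : Finset V) (k' : ℕ) (α : ℝ) : Prop :=
  ∀ T' T'' : Finset V, T' ⊆ T → T'' ⊆ T → Disjoint T' T'' → T'.card = T''.card →
    T'.card ≤ k' → HasUnitFlowIn G C T' T'' (1 / α)

/-- `T` is `α`-well-linked in `G`. -/
def WellLinked [Fintype V] (G : SimpleGraph V) (T : Finset V) (α : ℝ) : Prop :=
  WellLinkedIn G Finset.univ T α

/-- There is a family of pairwise vertex-disjoint paths in `G`, one starting at each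
vertex of `A`, each ending at a (necessarily distinct) vertex of `B`. -/
def NodeLinkedSets (G : SimpleGraph V) (A B : Finset V) : Prop :=
  ∃ P : Finset (Σ u v : V, G.Walk u v),
    (∀ p ∈ P, p.2.2.IsPath ∧ p.1 ∈ A ∧ p.2.1 ∈ B) ∧
    (∀ a ∈ A, ∃ p ∈ P, p.1 = a) ∧
    (∀ p ∈ P, ∀ q ∈ P, p ≠ q → ∀ x ∈ p.2.2.support, x ∉ q.2.2.support)

/-- `T` is node-well-linked in `G`. -/
def NodeWellLinked (G : SimpleGraph V) (T : Finset V) : Prop :=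
  ∀ T' T'' : Finset V, T' ⊆ T → T'' ⊆ T → Disjoint T' T'' → T'.card = T''.card →
    NodeLinkedSets G T' T''

/-- `(T₁, T₂)` are node-linked in `G`. -/
def NodeLinked (G : SimpleGraph V) (T₁ T₂ : Finset V) : Prop :=
  ∀ T' T'' : Finset V, T' ⊆ T₁ → T'' ⊆ T₂ → T'.card = T''.card → NodeLinkedSets G T' T''

/-- `(A,B)` is a `ρ`-balanced cut of the cluster `C` with respect to the vertex set `Γ`. -/
def IsBalancedCut (Γ A B C : Finset V) (ρ : ℝ) : Prop :=
  A ∪ B = C ∧ Disjoint A B ∧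
    ρ * (Γ.card : ℝ) ≤ ((A ∩ Γ).card : ℝ) ∧ ρ * (Γ.card : ℝ) ≤ ((B ∩ Γ).card : ℝ)


namespace StmtSeven

open SimpleGraph Finset

section MainLemmas

variable {V : Type}

/-- The graph `G` with all edges touching `S` removed. -/
def Avoid (G : SimpleGraph V) (S : Finset V) : SimpleGraph V where
  Adj u v := G.Adj u v ∧ u ∉ S ∧ v ∉ S
  symm := ⟨by rintro u v ⟨h, hu, hv⟩; exact ⟨h.symm, hv, hu⟩⟩
  loopless := ⟨fun a h => G.loopless.irrefl a h.1⟩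

lemma avoid_le {G : SimpleGraph V} {S : Finset V} : Avoid G S ≤ G := fun _ _ h => h.1

lemma avoid_support {G : SimpleGraph V} {S : Finset V} :
    ∀ {u v : V} (p : (Avoid G S).Walk u v), u ∉ S → ∀ z ∈ p.support, z ∉ S := by
  intro u v p
  induction p with
  | nil =>
    intro hu z hz
    rw [Walk.support_nil, List.mem_singleton] at hz
    subst hz; exact hu
  | cons h p ih =>
    intro hu z hz
    rw [Walk.support_cons, List.mem_cons] at hz
    rcases hz with rfl | hz
    · exact hu
    · exact ih h.2.2 z hz

lemma reach_of_clean {G : SimpleGraph V} {S : Finset V} :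
    ∀ {u v : V} (p : G.Walk u v), (∀ z ∈ p.support, z ∉ S) → (Avoid G S).Reachable u v := by
  intro u v p
  induction p with
  | nil => intro _; exact Reachable.refl _
  | @cons u w v h p ih =>
    intro hcl
    have hu : u ∉ S := hcl u (by rw [Walk.support_cons]; exact List.mem_cons_self)
    have hw : w ∉ S := hcl w (by
      rw [Walk.support_cons]
      exact List.mem_cons_of_mem _ p.start_mem_support)
    have hadj : (Avoid G S).Adj u w := ⟨h, hu, hw⟩
    exact hadj.reachable.trans (ih (fun z hz => hcl z (by
      rw [Walk.support_cons]; exact List.mem_cons_of_mem _ hz)))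

lemma cross_hit {G : SimpleGraph V} {S : Finset V} {u v : V}
    (h : ¬ (Avoid G S).Reachable u v) (p : G.Walk u v) : ∃ z ∈ p.support, z ∈ S := by
  by_contra h'
  push_neg at h'
  exact h (reach_of_clean p h')

lemma clean_walk {G : SimpleGraph V} {S : Finset V} {u v : V}
    (h : (Avoid G S).Reachable u v) (hu : u ∉ S) :
    ∃ p : G.Walk u v, ∀ z ∈ p.support, z ∉ S := by
  obtain ⟨q⟩ := h
  refine ⟨q.transfer G (fun e he => SimpleGraph.edgeSet_mono avoid_le
    (q.edges_subset_edgeSet he)), ?_⟩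
  intro z hz
  rw [Walk.support_transfer] at hz
  exact avoid_support q hu z hz

lemma sep_card_le {G : SimpleGraph V} {X Y S : Finset V}
    (h : NodeLinkedSets G X Y) (hsep : Sep G X Y S) : X.card ≤ S.card := by
  obtain ⟨P, hPmem, hPstart, hPdisj⟩ := h
  have hz : ∀ a : {a // a ∈ X}, ∃ z, z ∈ S ∧ ∃ p ∈ P, p.1 = a.1 ∧ z ∈ p.2.2.support := by
    rintro ⟨a, ha⟩
    obtain ⟨p, hp, hpa⟩ := hPstart a ha
    obtain ⟨z, hzsup, hzS⟩ := hsep p.1 (by rw [hpa]; exact ha) p.2.1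
      (hPmem p hp).2.2 p.2.2
    exact ⟨z, hzS, p, hp, hpa, hzsup⟩
  choose zf hzS hp using hz
  have hcard : X.attach.card ≤ S.card := by
    apply Finset.card_le_card_of_injOn zf (fun a _ => hzS a)
    intro a _ a' _ heq
    obtain ⟨p, hpP, hpa, hzp⟩ := hp a
    obtain ⟨p', hp'P, hp'a, hzp'⟩ := hp a'
    by_contra hne
    have hpp' : p ≠ p' := by
      intro h
      apply hne
      apply Subtype.ext
      rw [← hpa, ← hp'a, h]
    exact hPdisj p hpP p' hp'P hpp' (zf a) hzp (heq ▸ hzp')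
  rwa [Finset.card_attach] at hcard

lemma heavy_comp {G : SimpleGraph V} {T S : Finset V}
    (hn : NodeWellLinked G T) (hbig : 3 * S.card < (T \ S).card) :
    ∃ u ∈ T \ S,
      ∀ W ⊆ T \ S, (∀ w ∈ W, ¬ (Avoid G S).Reachable u w) → W.card ≤ S.card := by
  set F := T \ S with hF
  have hbip : ∀ Z ⊆ F, (∀ v ∈ Z, ∀ w ∈ F, (Avoid G S).Reachable v w → w ∈ Z) →
      min Z.card (F \ Z).card ≤ S.card := by
    intro Z hZF hcl
    obtain ⟨X, hXZ, hX⟩ := Finset.exists_subset_card_eq (min_le_left Z.card (F \ Z).card)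
    obtain ⟨Y, hYZ, hY⟩ := Finset.exists_subset_card_eq
      (min_le_right Z.card (F \ Z).card)
    have hXT : X ⊆ T := fun z hz => (Finset.mem_sdiff.mp (hZF (hXZ hz))).1
    have hYT : Y ⊆ T := fun z hz =>
      (Finset.mem_sdiff.mp (Finset.sdiff_subset (hYZ hz))).1
    have hdXY : Disjoint X Y := by
      rw [Finset.disjoint_left]
      intro a haX haY
      exact (Finset.mem_sdiff.mp (hYZ haY)).2 (hXZ haX)
    have hlink := hn X Y hXT hYT hdXY (hX.trans hY.symm)
    have hsep : Sep G X Y S := by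
      intro a ha b hb p
      apply cross_hit ?_ p
      intro hreach
      have hbF : b ∈ F := (Finset.mem_sdiff.mp (hYZ hb)).1
      have hbZ : b ∈ Z := hcl a (hXZ ha) b hbF hreach
      exact (Finset.mem_sdiff.mp (hYZ hb)).2 hbZ
    have := sep_card_le hlink hsep
    omega
  by_cases hex : ∃ u ∈ F, (F.filter (fun w => ¬ (Avoid G S).Reachable u w)).card ≤ S.card
  · obtain ⟨u, hu, hcard⟩ := hex
    refine ⟨u, hu, fun W hWsub hWprop => ?_⟩
    refine le_trans (Finset.card_le_card ?_) hcard
    intro w hw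
    exact Finset.mem_filter.mpr ⟨hWsub hw, hWprop w hw⟩
  exfalso
  push_neg at hex
  have hcomp : ∀ u ∈ F, (F.filter (fun w => (Avoid G S).Reachable u w)).card ≤ S.card := by
    intro u hu
    have hcl : ∀ v ∈ F.filter (fun w => (Avoid G S).Reachable u w), ∀ w ∈ F,
        (Avoid G S).Reachable v w → w ∈ F.filter (fun w => (Avoid G S).Reachable u w) := by
      intro v hv w hw hr
      exact Finset.mem_filter.mpr ⟨hw, (Finset.mem_filter.mp hv).2.trans hr⟩
    have h1 := hbip _ (Finset.filter_subset _ _) hcl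
    have h3 := hex u hu
    rw [Finset.filter_not] at h3
    have h3' : S.card < (F \ F.filter (fun w => (Avoid G S).Reachable u w)).card := h3
    rw [min_le_iff] at h1
    rcases h1 with h1 | h1
    · exact h1
    · omega
  set C : Finset (Finset V) := F.powerset.filter (fun Z =>
    (∀ v ∈ Z, ∀ w ∈ F, (Avoid G S).Reachable v w → w ∈ Z) ∧ S.card < Z.card) with hC
  have hFC : F ∈ C := by
    rw [hC, Finset.mem_filter, Finset.mem_powerset]
    exact ⟨Finset.Subset.refl _, fun v hv w hw _ => hw, by omega⟩
  obtain ⟨Z₀, hZ₀mem, hZ₀min⟩ := Finset.exists_min_image C Finset.card ⟨F, hFC⟩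
  rw [hC, Finset.mem_filter, Finset.mem_powerset] at hZ₀mem
  obtain ⟨hZ₀F, hZ₀cl, hZ₀big⟩ := hZ₀mem
  have hZ₀ne : Z₀.Nonempty := Finset.card_pos.mp (by omega)
  obtain ⟨v, hv⟩ := hZ₀ne
  have hvF : v ∈ F := hZ₀F hv
  set Cv := F.filter (fun w => (Avoid G S).Reachable v w) with hCvdef
  have hvCv : v ∈ Cv := Finset.mem_filter.mpr ⟨hvF, Reachable.refl _⟩
  have hCv : Cv.card ≤ S.card := hcomp v hvF
  set Z' := Z₀ \ Cv with hZ'def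
  have hZ'cl : ∀ w' ∈ Z', ∀ w ∈ F, (Avoid G S).Reachable w' w → w ∈ Z' := by
    intro w' hw' w hw hr
    rw [hZ'def, Finset.mem_sdiff] at hw' ⊢
    refine ⟨hZ₀cl w' hw'.1 w hw hr, ?_⟩
    intro hwCv
    exact hw'.2 (Finset.mem_filter.mpr ⟨hZ₀F hw'.1,
      ((Finset.mem_filter.mp hwCv).2.trans hr.symm)⟩)
  have hZ'card : Z₀.card ≤ Z'.card + S.card := by
    have h1 : Z₀.card - Cv.card ≤ Z'.card := by
      rw [hZ'def]
      exact Finset.le_card_sdiff Cv Z₀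
    omega
  have hZ'small : Z'.card ≤ S.card := by
    by_contra h'
    push_neg at h'
    have hZ'F : Z' ⊆ F := Finset.Subset.trans Finset.sdiff_subset hZ₀F
    have hmem : Z' ∈ C := by
      rw [hC, Finset.mem_filter, Finset.mem_powerset]
      exact ⟨hZ'F, hZ'cl, h'⟩
    have hlt : Z'.card < Z₀.card := by
      apply Finset.card_lt_card
      rw [Finset.ssubset_iff_of_subset Finset.sdiff_subset]
      exact ⟨v, hv, fun h => (Finset.mem_sdiff.mp h).2 hvCv⟩
    have := hZ₀min Z' hmem
    omega
  have h1 := hbip Z₀ hZ₀F hZ₀cl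
  rw [min_le_iff] at h1
  have h2 := Finset.le_card_sdiff Z₀ F
  omega

lemma edge_through {G : SimpleGraph V} : ∀ {u v : V} (p : G.Walk u v), ∀ z ∈ p.support,
    (∃ e ∈ p.edges, z ∈ e) ∨ (z = u ∧ v = u) := by
  intro u v p
  induction p with
  | nil =>
    intro z hz
    rw [Walk.support_nil, List.mem_singleton] at hz
    exact Or.inr ⟨hz, rfl⟩
  | @cons u w v h p ih =>
    intro z hz
    rw [Walk.support_cons, List.mem_cons] at hz
    rcases hz with rfl | hz
    · exact Or.inl ⟨s(z, w), by rw [Walk.edges_cons]; exact List.mem_cons_self,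
        Sym2.mem_mk_left _ _⟩
    · rcases ih z hz with ⟨e, he, hze⟩ | ⟨rfl, -⟩
      · exact Or.inl ⟨e, by rw [Walk.edges_cons]; exact List.mem_cons_of_mem _ he, hze⟩
      · exact Or.inl ⟨s(u, z), by rw [Walk.edges_cons]; exact List.mem_cons_self,
          Sym2.mem_mk_right _ _⟩

lemma deg_one_walk [Fintype V] {G : SimpleGraph V} (h1 : ∀ v, deg G v ≤ 1) :
    ∀ {u v : V} (p : G.Walk u v), v = u ∨ G.Adj u v := by
  intro u v p
  induction p with
  | nil => exact Or.inl rfl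
  | @cons u w v h p ih =>
    rcases ih with rfl | hwv
    · exact Or.inr h
    · by_cases huv : v = u
      · exact Or.inl huv
      · exfalso
        have hu : u ∈ Finset.univ.filter (fun x => G.Adj w x) :=
          Finset.mem_filter.mpr ⟨Finset.mem_univ _, h.symm⟩
        have hv' : v ∈ Finset.univ.filter (fun x => G.Adj w x) :=
          Finset.mem_filter.mpr ⟨Finset.mem_univ _, hwv⟩
        have : 1 < deg G w := Finset.one_lt_card.mpr ⟨u, hu, v, hv', fun h' => huv h'.symm⟩
        have := h1 w
        omega

lemma flow_walk {G : SimpleGraph V} {Cs A B : Finset V} {η : ℝ}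
    (h : HasUnitFlowIn G Cs A B η) {a b : V} (ha : a ∈ A) (hB : B = {b}) :
    Nonempty (G.Walk a b) := by
  obtain ⟨P, f, hf0, hends, hsup, hsrc, hsink, hcong⟩ := h
  have h1 := hsrc a ha
  have hne : (P.filter (fun p => p.1 = a)).Nonempty := by
    by_contra h'
    rw [Finset.not_nonempty_iff_eq_empty] at h'
    rw [h', Finset.sum_empty] at h1
    norm_num at h1
  obtain ⟨p, hp⟩ := hne
  rw [Finset.mem_filter] at hp
  have hbend : p.2.1 = b := by
    have h2 := (hends p hp.1).2
    rw [hB, Finset.mem_singleton] at h2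
    exact h2
  exact ⟨p.2.2.copy hp.2 hbend⟩

end MainLemmas

end StmtSeven

/-- Node-linkedness of small subsets from node-well-linkedness. -/
theorem stmt7 [Fintype V] (G : SimpleGraph V)
    (Δ : ℕ) (hΔ : ∀ v, deg G v ≤ Δ)
    (T₁ T₂ : Finset V) (hdisj : Disjoint T₁ T₂) (κ : ℕ)
    (h1 : κ ≤ T₁.card) (h2 : κ ≤ T₂.card)
    (α : ℝ) (hα0 : 0 < α) (hα1 : α < 1)
    (hwl : WellLinked G (T₁ ∪ T₂) α)
    (hn1 : NodeWellLinked G T₁) (hn2 : NodeWellLinked G T₂)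
    (T₁' T₂' : Finset V) (hs1 : T₁' ⊆ T₁) (hs2 : T₂' ⊆ T₂)
    (hcards : T₁'.card = T₂'.card)
    (hsize : (T₁'.card : ℝ) ≤ α * (κ : ℝ) / (2 * Δ)) :
    NodeLinkedSets G T₁' T₂' := by
  classical
  by_cases hk0 : T₁' = ∅
  · refine ⟨∅, by simp, ?_, by simp⟩
    intro a ha
    rw [hk0] at ha
    exact absurd ha (Finset.notMem_empty a)
  have hk1 : 1 ≤ T₁'.card := Finset.card_pos.mpr (Finset.nonempty_of_ne_empty hk0)
  set k := T₁'.card with hkdef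
  have hwalk : ∀ a ∈ T₁ ∪ T₂, ∀ b ∈ T₁ ∪ T₂, a ≠ b → Nonempty (G.Walk a b) := by
    intro a ha b hb hab
    have hd : Disjoint ({a} : Finset V) ({b} : Finset V) := by
      simp only [Finset.disjoint_singleton_left, Finset.mem_singleton]
      exact hab
    exact StmtSeven.flow_walk (hwl {a} {b} (Finset.singleton_subset_iff.mpr ha)
      (Finset.singleton_subset_iff.mpr hb) hd (by simp)) (Finset.mem_singleton_self a) rfl
  have hΔ0 : Δ ≠ 0 := by
    intro hzero
    rw [hzero] at hsize
    simp only [Nat.cast_zero, mul_zero, div_zero] at hsize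
    have hc1 : (1:ℝ) ≤ (k : ℝ) := by exact_mod_cast hk1
    linarith
  have hΔpos : (0:ℝ) < 2 * (Δ:ℝ) := by
    have hone : (1:ℕ) ≤ Δ := Nat.one_le_iff_ne_zero.mpr hΔ0
    have hone' : (1:ℝ) ≤ (Δ:ℝ) := by exact_mod_cast hone
    linarith
  have h2Δk : 2 * (Δ:ℝ) * k ≤ α * κ := by
    rw [le_div_iff₀ hΔpos] at hsize
    linarith
  have hΔ1 : Δ ≠ 1 := by
    intro hone
    rw [hone] at h2Δk
    simp only [Nat.cast_one, mul_one] at h2Δk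
    have hkr : (1:ℝ) ≤ (k:ℝ) := by exact_mod_cast hk1
    have hc2 : (2:ℝ) ≤ α * κ := by linarith
    have hκpos : (0:ℝ) < (κ:ℝ) := by nlinarith
    have hακ : α * (κ:ℝ) < κ := by nlinarith
    have hc2' : (2:ℝ) < (κ:ℝ) := lt_of_le_of_lt hc2 hακ
    have hκ2 : 2 < κ := by exact_mod_cast hc2'
    have hT₁2 : 1 < T₁.card := by omega
    obtain ⟨a₁, ha₁, a₂, ha₂, ha12⟩ := Finset.one_lt_card.mp hT₁2
    have hT₂pos : 0 < T₂.card := by omega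
    obtain ⟨c, hc⟩ := Finset.card_pos.mp hT₂pos
    have hac1 : a₁ ≠ c := fun h => (Finset.disjoint_left.mp hdisj ha₁) (h ▸ hc)
    have hac2 : a₂ ≠ c := fun h => (Finset.disjoint_left.mp hdisj ha₂) (h ▸ hc)
    obtain ⟨p₁⟩ := hwalk a₁ (Finset.mem_union_left _ ha₁) c (Finset.mem_union_right _ hc) hac1
    obtain ⟨p₂⟩ := hwalk a₂ (Finset.mem_union_left _ ha₂) c (Finset.mem_union_right _ hc) hac2
    have hdeg1 : ∀ v, deg G v ≤ 1 := by intro v; have := hΔ v; omega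
    have hadj1 : G.Adj a₁ c :=
      (StmtSeven.deg_one_walk hdeg1 p₁).resolve_left (fun h => hac1 h.symm)
    have hadj2 : G.Adj a₂ c :=
      (StmtSeven.deg_one_walk hdeg1 p₂).resolve_left (fun h => hac2 h.symm)
    have hdegc : 1 < deg G c := by
      unfold deg
      exact Finset.one_lt_card.mpr ⟨a₁,
        Finset.mem_filter.mpr ⟨Finset.mem_univ _, hadj1.symm⟩, a₂,
        Finset.mem_filter.mpr ⟨Finset.mem_univ _, hadj2.symm⟩, fun h => ha12 h⟩
    have := hΔ c
    omega
  have hΔ2 : 2 ≤ Δ := by omega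
  have hΔr : (2:ℝ) ≤ (Δ:ℝ) := by exact_mod_cast hΔ2
  have hkr : (1:ℝ) ≤ (k:ℝ) := by exact_mod_cast hk1
  have hκpos : (0:ℝ) < (κ:ℝ) := by nlinarith
  have h4k : 4 * k < κ := by
    have hc1 : (4:ℝ) * k ≤ 2 * Δ * k := by nlinarith
    have hc2 : α * (κ:ℝ) < κ := by nlinarith
    have hc3 : (4:ℝ) * k < κ := by linarith
    exact_mod_cast hc3
  by_cases hsepall : ∀ S : Finset V, StmtSeven.Sep G T₁' T₂' S → k ≤ S.card
  · obtain ⟨P, hPcard, hPmem, hPdisj⟩ :=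
      StmtSeven.menger k G.edgeSet.ncard G T₁' T₂' le_rfl hsepall
    refine ⟨P, hPmem, ?_, hPdisj⟩
    have hinj : Set.InjOn (fun p : Σ u v : V, G.Walk u v => p.1) P := by
      intro p hp q hq heq
      by_contra hne
      exact hPdisj p hp q hq hne p.1 p.2.2.start_mem_support
        (by rw [show p.1 = q.1 from heq]; exact q.2.2.start_mem_support)
    have himg : P.image (fun p => p.1) = T₁' := by
      apply Finset.eq_of_subset_of_card_le
      · intro a ha
        obtain ⟨p, hp, rfl⟩ := Finset.mem_image.mp ha
        exact (hPmem p hp).2.1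
      · rw [Finset.card_image_of_injOn hinj, hPcard]
    intro a ha
    rw [← himg] at ha
    obtain ⟨p, hp, hpa⟩ := Finset.mem_image.mp ha
    exact ⟨p, hp, hpa⟩
  · exfalso
    push_neg at hsepall
    obtain ⟨S, hSsep, hSk⟩ := hsepall
    have hsk : S.card < k := hSk
    have hF1 : 3 * S.card < (T₁ \ S).card := by
      have hq1 := Finset.le_card_sdiff S T₁
      omega
    have hF2 : 3 * S.card < (T₂ \ S).card := by
      have hq1 := Finset.le_card_sdiff S T₂
      omega
    obtain ⟨u₁, hu₁F, hu₁heavy⟩ := StmtSeven.heavy_comp hn1 hF1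
    obtain ⟨u₂, hu₂F, hu₂heavy⟩ := StmtSeven.heavy_comp hn2 hF2
    set H := StmtSeven.Avoid G S with hH
    set C₁ := (T₁ \ S).filter (fun w => H.Reachable u₁ w) with hC₁def
    set C₂ := (T₂ \ S).filter (fun w => H.Reachable u₂ w) with hC₂def
    have hmass1 : κ ≤ C₁.card + 2 * S.card := by
      have hpart := Finset.card_filter_add_card_filter_not
        (s := T₁ \ S) (p := fun w => H.Reachable u₁ w)
      have hq2 : ((T₁ \ S).filter (fun w => ¬ H.Reachable u₁ w)).card ≤ S.card := by
        refine hu₁heavy _ (Finset.filter_subset _ _) ?_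
        intro w hw
        exact (Finset.mem_filter.mp hw).2
      have hsd := Finset.le_card_sdiff S T₁
      have hceq : ((T₁ \ S).filter (fun w => H.Reachable u₁ w)).card = C₁.card := rfl
      omega
    have hmass2 : κ ≤ C₂.card + 2 * S.card := by
      have hpart := Finset.card_filter_add_card_filter_not
        (s := T₂ \ S) (p := fun w => H.Reachable u₂ w)
      have hq2 : ((T₂ \ S).filter (fun w => ¬ H.Reachable u₂ w)).card ≤ S.card := by
        refine hu₂heavy _ (Finset.filter_subset _ _) ?_
        intro w hw
        exact (Finset.mem_filter.mp hw).2
      have hsd := Finset.le_card_sdiff S T₂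
      have hceq : ((T₂ \ S).filter (fun w => H.Reachable u₂ w)).card = C₂.card := rfl
      omega
    have hT₂'k : T₂'.card = k := hcards.symm
    by_cases hA2 : ∀ t ∈ T₂', t ∉ S → ¬ H.Reachable u₂ t
    · have hYc : k ≤ (C₂ \ T₂').card := by
        have hq1 := Finset.le_card_sdiff T₂' C₂
        omega
      obtain ⟨Y, hYsub, hYcard⟩ := Finset.exists_subset_card_eq hYc
      have hYC₂ : Y ⊆ C₂ := hYsub.trans Finset.sdiff_subset
      have hYT₂ : Y ⊆ T₂ := fun z hz =>
        (Finset.mem_sdiff.mp (Finset.filter_subset _ _ (hYC₂ hz))).1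
      have hdY : Disjoint T₂' Y := by
        rw [Finset.disjoint_right]
        intro a haY haT
        exact (Finset.mem_sdiff.mp (hYsub haY)).2 haT
      have hlink := hn2 T₂' Y hs2 hYT₂ hdY (by rw [hT₂'k, hYcard])
      have hsep' : StmtSeven.Sep G T₂' Y S := by
        intro a ha b hb p
        by_cases haS : a ∈ S
        · exact ⟨a, p.start_mem_support, haS⟩
        · refine StmtSeven.cross_hit ?_ p
          intro hr
          have hbC : H.Reachable u₂ b := (Finset.mem_filter.mp (hYC₂ hb)).2
          exact hA2 a ha haS (hbC.trans hr.symm)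
      have hle := StmtSeven.sep_card_le hlink hsep'
      omega
    by_cases hA1 : ∀ t ∈ T₁', t ∉ S → ¬ H.Reachable u₁ t
    · have hYc : k ≤ (C₁ \ T₁').card := by
        have hq1 := Finset.le_card_sdiff T₁' C₁
        omega
      obtain ⟨Y, hYsub, hYcard⟩ := Finset.exists_subset_card_eq hYc
      have hYC₁ : Y ⊆ C₁ := hYsub.trans Finset.sdiff_subset
      have hYT₁ : Y ⊆ T₁ := fun z hz =>
        (Finset.mem_sdiff.mp (Finset.filter_subset _ _ (hYC₁ hz))).1
      have hdY : Disjoint T₁' Y := by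
        rw [Finset.disjoint_right]
        intro a haY haT
        exact (Finset.mem_sdiff.mp (hYsub haY)).2 haT
      have hlink := hn1 T₁' Y hs1 hYT₁ hdY (by rw [← hkdef, hYcard])
      have hsep' : StmtSeven.Sep G T₁' Y S := by
        intro a ha b hb p
        by_cases haS : a ∈ S
        · exact ⟨a, p.start_mem_support, haS⟩
        · refine StmtSeven.cross_hit ?_ p
          intro hr
          have hbC : H.Reachable u₁ b := (Finset.mem_filter.mp (hYC₁ hb)).2
          exact hA1 a ha haS (hbC.trans hr.symm)
      have hle := StmtSeven.sep_card_le hlink hsep'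
      omega
    push_neg at hA1 hA2
    obtain ⟨t₁, ht₁, ht₁S, ht₁R⟩ := hA1
    obtain ⟨t₂, ht₂, ht₂S, ht₂R⟩ := hA2
    have hnR : ¬ H.Reachable u₁ u₂ := by
      intro hr
      obtain ⟨p, hp⟩ := StmtSeven.clean_walk ((ht₁R.symm.trans hr).trans ht₂R) ht₁S
      obtain ⟨z, hz, hzS⟩ := hSsep t₁ ht₁ t₂ ht₂ p
      exact hp z hz hzS
    set m := κ - 2 * S.card with hmdef
    have hm1 : m ≤ C₁.card := by omega
    have hm2 : m ≤ C₂.card := by omega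
    obtain ⟨X, hXsub, hXcard⟩ := Finset.exists_subset_card_eq hm1
    obtain ⟨Y, hYsub, hYcard⟩ := Finset.exists_subset_card_eq hm2
    have hXT : X ⊆ T₁ := fun z hz =>
      (Finset.mem_sdiff.mp (Finset.filter_subset _ _ (hXsub hz))).1
    have hYT : Y ⊆ T₂ := fun z hz =>
      (Finset.mem_sdiff.mp (Finset.filter_subset _ _ (hYsub hz))).1
    have hXY : Disjoint X Y := hdisj.mono hXT hYT
    obtain ⟨P, f, hf0, hends, hsupC, hsrc, hsink, hcong⟩ :=
      hwl X Y (hXT.trans Finset.subset_union_left) (hYT.trans Finset.subset_union_right)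
        hXY (by rw [hXcard, hYcard])
    set ES := S.biUnion (fun v => G.incidenceFinset v) with hESdef
    have hEScard : ES.card ≤ S.card * Δ := by
      refine le_trans Finset.card_biUnion_le ?_
      have hdegb : ∀ v ∈ S, (G.incidenceFinset v).card ≤ Δ := by
        intro v hv
        rw [SimpleGraph.card_incidenceFinset_eq_degree]
        have hdd : G.degree v = deg G v := by
          unfold deg
          rw [SimpleGraph.degree, SimpleGraph.neighborFinset_eq_filter]
        rw [hdd]
        exact hΔ v
      calc ∑ v ∈ S, (G.incidenceFinset v).card ≤ ∑ _v ∈ S, Δ := Finset.sum_le_sum hdegb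
        _ = S.card * Δ := by rw [Finset.sum_const, smul_eq_mul]
    have hhit : ∀ p ∈ P, ∃ e ∈ p.2.2.edges, e ∈ ES := by
      intro p hp
      obtain ⟨hpX, hpY⟩ := hends p hp
      have hne : p.1 ≠ p.2.1 := by
        intro h
        exact (Finset.disjoint_left.mp hXY hpX) (h ▸ hpY)
      have hr1 : H.Reachable u₁ p.1 := (Finset.mem_filter.mp (hXsub hpX)).2
      have hr2 : H.Reachable u₂ p.2.1 := (Finset.mem_filter.mp (hYsub hpY)).2
      have hnr : ¬ H.Reachable p.1 p.2.1 := fun h => hnR ((hr1.trans h).trans hr2.symm)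
      obtain ⟨z, hz, hzS⟩ := StmtSeven.cross_hit hnr p.2.2
      obtain ⟨e, he, hze⟩ := (StmtSeven.edge_through p.2.2 z hz).resolve_right
        (fun h => hne h.2.symm)
      refine ⟨e, he, Finset.mem_biUnion.mpr ⟨z, hzS, ?_⟩⟩
      rw [SimpleGraph.mem_incidenceFinset]
      exact ⟨p.2.2.edges_subset_edgeSet he, hze⟩
    have hval : (m:ℝ) = ∑ p ∈ P, f p := by
      rw [← Finset.sum_fiberwise_of_maps_to (g := fun p : Σ u v : V, G.Walk u v => p.1)
        (fun p hp => (hends p hp).1) f]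
      rw [Finset.sum_congr rfl (fun a ha => hsrc a ha), Finset.sum_const, nsmul_eq_mul,
        mul_one, hXcard]
    have hub : ∑ p ∈ P, f p ≤ (ES.card : ℝ) * (1/α) := by
      calc ∑ p ∈ P, f p
          ≤ ∑ p ∈ P, ∑ _e ∈ ES.filter (fun e => e ∈ p.2.2.edges), f p := by
            refine Finset.sum_le_sum ?_
            intro p hp
            rw [Finset.sum_const, nsmul_eq_mul]
            obtain ⟨e, he, heES⟩ := hhit p hp
            have hcard1 : (1:ℝ) ≤ ((ES.filter (fun e => e ∈ p.2.2.edges)).card : ℝ) := by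
              have hpos : 0 < (ES.filter (fun e => e ∈ p.2.2.edges)).card :=
                Finset.card_pos.mpr ⟨e, Finset.mem_filter.mpr ⟨heES, he⟩⟩
              exact_mod_cast hpos
            exact le_mul_of_one_le_left (hf0 p hp) hcard1
        _ = ∑ e ∈ ES, ∑ p ∈ P.filter (fun p => e ∈ p.2.2.edges), f p := by
            simp_rw [Finset.sum_filter]
            exact Finset.sum_comm
        _ ≤ ∑ _e ∈ ES, (1/α) := Finset.sum_le_sum (fun e _ => hcong e)
        _ = (ES.card : ℝ) * (1/α) := by rw [Finset.sum_const, nsmul_eq_mul]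
    have h2s : 2 * S.card ≤ κ := by omega
    have hmr : (m:ℝ) = (κ:ℝ) - 2 * S.card := by
      rw [hmdef]
      push_cast [Nat.cast_sub h2s]
      ring
    have hcomb : α * ((κ:ℝ) - 2 * S.card) ≤ (S.card:ℝ) * Δ := by
      have hq1 : (m:ℝ) ≤ ((S.card * Δ : ℕ):ℝ) * (1/α) := by
        rw [hval]
        refine le_trans hub ?_
        have hq2 : ((ES.card:ℕ):ℝ) ≤ ((S.card * Δ:ℕ):ℝ) := by exact_mod_cast hEScard
        have hq3 : (0:ℝ) ≤ 1/α := by positivity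
        exact mul_le_mul_of_nonneg_right hq2 hq3
      rw [hmr, mul_one_div, le_div_iff₀ hα0] at hq1
      push_cast at hq1
      linarith
    have hsr : (S.card:ℝ) + 1 ≤ (k:ℝ) := by exact_mod_cast hsk
    have hs0 : (0:ℝ) ≤ (S.card:ℝ) := Nat.cast_nonneg _
    have e1 : (0:ℝ) ≤ (S.card:ℝ) * ((Δ:ℝ) - 2) := by
      apply mul_nonneg hs0
      linarith
    have e2 : (0:ℝ) ≤ (1 - α) * (S.card:ℝ) := by
      apply mul_nonneg ?_ hs0
      linarith
    have e3 : (0:ℝ) ≤ ((k:ℝ) - 1 - S.card) * (2 * (Δ:ℝ)) := by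
      apply mul_nonneg ?_ (by linarith)
      linarith
    linarith [h2Δk, hcomb, e1, e2, e3, hΔr]
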